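/- For every density matrix σ on ℂ² ⊗ ℂ², with x_{jk} = ⟨φʲ, σ φᵏ⟩, one has 3·Tr((σ ⊗ σ)·K₅⁺) − 5·Tr((σ ⊗ σ)·K₃⁻) = (x₁₁−x₂₂)² + (x₂₂−x₃₃)² + (x₃₃−x₁₁)² + 4·((Im x₁₂)² + (Im x₂₃)² + (Im x₃₁)²) + 6·(|x₁₂|² + |x₂₃|² + |x₃₁|²); in particular 3·Tr((σ ⊗ σ)·K₅⁺) ≥ 5·Tr((σ ⊗ σ)·K₃⁻). -/

import Mathlib

open Matrix
open scoped Matrix Kronecker ComplexOrder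

noncomputable section

/-- Index type of `ℂ² ⊗ ℂ²`. -/
abbrev Q : Type := Fin 2 × Fin 2

/-- The standard basis vector `|ab⟩` of `ℂ² ⊗ ℂ²`. -/
def ket (a b : Fin 2) : Q → ℂ := fun p => if p = (a, b) then 1 else 0

/-- The Bell basis `φ⁰, φ¹, φ², φ³` of `ℂ² ⊗ ℂ²`. -/
def bell : Fin 4 → Q → ℂ
  | 0 => fun p => (ket 0 0 p + ket 1 1 p) / (Real.sqrt 2 : ℂ)
  | 1 => fun p => Complex.I * (ket 0 1 p + ket 1 0 p) / (Real.sqrt 2 : ℂ)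
  | 2 => fun p => (-ket 0 1 p + ket 1 0 p) / (Real.sqrt 2 : ℂ)
  | 3 => fun p => Complex.I * (ket 0 0 p - ket 1 1 p) / (Real.sqrt 2 : ℂ)

/-- The product basis `e^{jk} = φʲ ⊗ φᵏ` of `(ℂ²⊗ℂ²)⊗(ℂ²⊗ℂ²)`. -/
def e (j k : Fin 4) : Q × Q → ℂ := fun pq => bell j pq.1 * bell k pq.2

/-- Rank-one operator `|v⟩⟨v|`. -/
def outer {m : Type*} (v : m → ℂ) : Matrix m m ℂ := vecMulVec v (star v)

/-- Orthogonal projection onto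
`span{e^{jk}+e^{kj} : 1≤j<k≤3} ∪ {e^{11}−e^{22}, e^{22}−e^{33}}`. -/
def K5 : Matrix (Q × Q) (Q × Q) ℂ :=
  (1 / 2 : ℂ) • (outer (e 1 2 + e 2 1) + outer (e 2 3 + e 3 2) + outer (e 3 1 + e 1 3)) +
    (1 / 2 : ℂ) • outer (e 1 1 - e 2 2) +
    (1 / 6 : ℂ) • outer (e 1 1 + e 2 2 - (2 : ℂ) • e 3 3)

/-- Orthogonal projection onto `span{e^{11}+e^{22}+e^{33}}`. -/
def K1 : Matrix (Q × Q) (Q × Q) ℂ :=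
  (1 / 3 : ℂ) • outer (e 1 1 + e 2 2 + e 3 3)

/-- Orthogonal projection onto `span{e^{jk}−e^{kj} : 1≤j<k≤3}`. -/
def K3m : Matrix (Q × Q) (Q × Q) ℂ :=
  (1 / 2 : ℂ) • (outer (e 1 2 - e 2 1) + outer (e 2 3 - e 3 2) + outer (e 3 1 - e 1 3))

/-- Orthogonal projection onto `span{e^{00}}`. -/
def L1 : Matrix (Q × Q) (Q × Q) ℂ := outer (e 0 0)

/-- Orthogonal projection onto `span{e^{0j}+e^{j0} : j=1,2,3}`. -/
def L3p : Matrix (Q × Q) (Q × Q) ℂ :=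
  (1 / 2 : ℂ) • (outer (e 0 1 + e 1 0) + outer (e 0 2 + e 2 0) + outer (e 0 3 + e 3 0))

/-- Orthogonal projection onto `span{e^{0j}−e^{j0} : j=1,2,3}`. -/
def L3m : Matrix (Q × Q) (Q × Q) ℂ :=
  (1 / 2 : ℂ) • (outer (e 0 1 - e 1 0) + outer (e 0 2 - e 2 0) + outer (e 0 3 - e 3 0))

/-- The matrix elements `x_{jk} = ⟨φʲ, σ φᵏ⟩` of a state `σ` in the Bell basis. -/
def x (σ : Matrix Q Q ℂ) (j k : Fin 4) : ℂ := star (bell j) ⬝ᵥ σ.mulVec (bell k)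


lemma trace_mul_outer (M : Matrix (Q×Q) (Q×Q) ℂ) (v : Q×Q → ℂ) :
    (M * outer v).trace = star v ⬝ᵥ M.mulVec v := by
  simp only [Matrix.trace, Matrix.diag_apply, Matrix.mul_apply, outer, vecMulVec_apply,
    dotProduct, mulVec, Pi.star_apply, Finset.mul_sum]
  refine Finset.sum_congr rfl fun p _ => Finset.sum_congr rfl fun q _ => ?_
  ring

lemma dot_e (σ : Matrix Q Q ℂ) (j k l m : Fin 4) :
    star (e j k) ⬝ᵥ (σ ⊗ₖ σ).mulVec (e l m) = x σ j l * x σ k m := by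
  simp only [x, dotProduct, mulVec, e, kroneckerMap_apply, Pi.star_apply, star_mul',
    Fintype.sum_prod_type, Finset.mul_sum, Finset.sum_mul]
  simp only [Fin.sum_univ_two]
  ring

lemma herm (σ : Matrix Q Q ℂ) (h : σ.IsHermitian) (j k : Fin 4) :
    x σ k j = star (x σ j k) := by
  simp only [x, dotProduct, mulVec, Finset.mul_sum, star_sum, star_mul', Pi.star_apply,
    star_star]
  rw [Finset.sum_comm]
  refine Finset.sum_congr rfl fun p _ => Finset.sum_congr rfl fun q _ => ?_
  rw [show σ q p = star (σ p q) from (h.apply q p).symm ▸ rfl]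
  ring

lemma him (z : ℂ) : ((z.im : ℂ))^2 = -((z - star z)^2) / 4 := by
  have h := Complex.sub_conj z
  rw [show star z = (starRingEnd ℂ) z from rfl, h]
  push_cast
  rw [mul_pow, Complex.I_sq]
  ring

lemma hnorm (z : ℂ) : ((‖z‖ : ℂ))^2 = z * star z := by
  rw [show star z = (starRingEnd ℂ) z from rfl, Complex.mul_conj]
  norm_cast
  exact Complex.sq_norm z

/-- `3 Tr((σ⊗σ)K₅⁺) − 5 Tr((σ⊗σ)K₃⁻)` is an explicit sum of squares;
in particular `3 Tr((σ⊗σ)K₅⁺) ≥ 5 Tr((σ⊗σ)K₃⁻)`. -/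
theorem stmt13 (σ : Matrix Q Q ℂ) (hσ : σ.PosSemidef) (htr : σ.trace = 1) :
    (3 * ((σ ⊗ₖ σ) * K5).trace - 5 * ((σ ⊗ₖ σ) * K3m).trace =
      (x σ 1 1 - x σ 2 2) ^ 2 + (x σ 2 2 - x σ 3 3) ^ 2 + (x σ 3 3 - x σ 1 1) ^ 2 +
      4 * ((((x σ 1 2).im : ℂ)) ^ 2 + (((x σ 2 3).im : ℂ)) ^ 2 +
        (((x σ 3 1).im : ℂ)) ^ 2) +
      6 * (((‖x σ 1 2‖ : ℂ)) ^ 2 + ((‖x σ 2 3‖ : ℂ)) ^ 2 + ((‖x σ 3 1‖ : ℂ)) ^ 2)) ∧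
    5 * (((σ ⊗ₖ σ) * K3m).trace).re ≤ 3 * (((σ ⊗ₖ σ) * K5).trace).re := by
  have hh := herm σ hσ.1
  have heq : 3 * ((σ ⊗ₖ σ) * K5).trace - 5 * ((σ ⊗ₖ σ) * K3m).trace =
      (x σ 1 1 - x σ 2 2) ^ 2 + (x σ 2 2 - x σ 3 3) ^ 2 + (x σ 3 3 - x σ 1 1) ^ 2 +
      4 * ((((x σ 1 2).im : ℂ)) ^ 2 + (((x σ 2 3).im : ℂ)) ^ 2 +
        (((x σ 3 1).im : ℂ)) ^ 2) +
      6 * (((‖x σ 1 2‖ : ℂ)) ^ 2 + ((‖x σ 2 3‖ : ℂ)) ^ 2 + ((‖x σ 3 1‖ : ℂ)) ^ 2) := by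
    simp only [K5, K3m, Matrix.mul_add, Matrix.mul_smul, trace_add, trace_smul,
      trace_mul_outer, star_add, star_sub, star_smul, star_ofNat, mulVec_add, mulVec_sub,
      mulVec_smul, add_dotProduct, sub_dotProduct, smul_dotProduct, dotProduct_add,
      dotProduct_sub, dotProduct_smul, dot_e, smul_eq_mul, him, hnorm]
    rw [hh 1 2, hh 2 3, hh 3 1]
    ring
  refine ⟨heq, ?_⟩
  have hr : ∀ z : ℂ, star z = z → z = ((z.re : ℝ) : ℂ) := fun z h =>
    (Complex.conj_eq_iff_re.mp h).symm
  have e1 : x σ 1 1 - x σ 2 2 = (((x σ 1 1 - x σ 2 2).re : ℝ) : ℂ) :=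
    hr _ (by rw [star_sub, ← hh 1 1, ← hh 2 2])
  have e2 : x σ 2 2 - x σ 3 3 = (((x σ 2 2 - x σ 3 3).re : ℝ) : ℂ) :=
    hr _ (by rw [star_sub, ← hh 2 2, ← hh 3 3])
  have e3 : x σ 3 3 - x σ 1 1 = (((x σ 3 3 - x σ 1 1).re : ℝ) : ℂ) :=
    hr _ (by rw [star_sub, ← hh 3 3, ← hh 1 1])
  set R : ℝ := (x σ 1 1 - x σ 2 2).re ^ 2 + (x σ 2 2 - x σ 3 3).re ^ 2 +
      (x σ 3 3 - x σ 1 1).re ^ 2 +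
      4 * ((x σ 1 2).im ^ 2 + (x σ 2 3).im ^ 2 + (x σ 3 1).im ^ 2) +
      6 * (‖x σ 1 2‖ ^ 2 + ‖x σ 2 3‖ ^ 2 + ‖x σ 3 1‖ ^ 2) with hRdef
  have heq2 : 3 * ((σ ⊗ₖ σ) * K5).trace - 5 * ((σ ⊗ₖ σ) * K3m).trace = ((R : ℝ) : ℂ) := by
    rw [heq, e1, e2, e3, hRdef]
    push_cast
    ring
  have h3 : (3 * ((σ ⊗ₖ σ) * K5).trace - 5 * ((σ ⊗ₖ σ) * K3m).trace).re =
      3 * (((σ ⊗ₖ σ) * K5).trace).re - 5 * (((σ ⊗ₖ σ) * K3m).trace).re := by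
    simp [Complex.sub_re, Complex.mul_re]
  have hfin : 3 * (((σ ⊗ₖ σ) * K5).trace).re - 5 * (((σ ⊗ₖ σ) * K3m).trace).re = R := by
    rw [← h3, heq2, Complex.ofReal_re]
  have hR : 0 ≤ R := by rw [hRdef]; positivity
  linarith
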